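/- Let P be a probability measure on (𝒳,ℬ) and Q a signed finite measure on (𝒳,ℬ) absolutely continuous with respect to P. Then φ(Q,P) := ∫ φ(dQ/dP) dP satisfies φ(Q,P) ≥ 0, and φ(Q,P) = 0 if and only if Q = P. -/

import Mathlib

open MeasureTheory
open scoped ENNReal

/-- Let `P` be a probability measure and `Q` a signed finite measure
absolutely continuous w.r.t. `P`.  For `φ : ℝ → [0,∞]` convex with `φ(1) = 0` and
strictly convex on a neighborhood of `1`, the `φ`-divergence
`φ(Q,P) = ∫ φ(dQ/dP) dP` is nonnegative, and it vanishes iff `Q = P`. -/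
theorem stmt18_phi_divergence_nonneg_and_eq_zero_iff
    {𝒳 : Type*} [MeasurableSpace 𝒳]
    (P : Measure 𝒳) [IsProbabilityMeasure P]
    (Q : SignedMeasure 𝒳)
    (hQP : Q ≪ᵥ P.toENNRealVectorMeasure)
    (φ : ℝ → ℝ≥0∞)
    (hφ1 : φ 1 = 0)
    -- convexity of φ
    (hconv : ∀ x y t : ℝ, 0 ≤ t → t ≤ 1 →
      φ (t * x + (1 - t) * y) ≤ ENNReal.ofReal t * φ x + ENNReal.ofReal (1 - t) * φ y)
    -- strict convexity on a neighborhood of 1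
    (hstrict : ∃ ε > (0 : ℝ), ∀ x y : ℝ, |x - 1| < ε → |y - 1| < ε → x ≠ y →
      ∀ t : ℝ, 0 < t → t < 1 →
      φ (t * x + (1 - t) * y) < ENNReal.ofReal t * φ x + ENNReal.ofReal (1 - t) * φ y) :
    0 ≤ ∫⁻ x, φ (Q.rnDeriv P x) ∂P ∧
      ((∫⁻ x, φ (Q.rnDeriv P x) ∂P) = 0 ↔ Q = P.toSignedMeasure) := by
  obtain ⟨ε, hε, hs⟩ := hstrict
  set f := Q.rnDeriv P with hf
  have hfm : Measurable f := SignedMeasure.measurable_rnDeriv Q P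
  -- φ vanishes only at 1
  have hzero : ∀ y : ℝ, φ y = 0 → y = 1 := by
    intro y hy
    by_contra hy1
    have hd : 0 < |y - 1| := by
      simp [abs_pos, sub_eq_zero, hy1]
    set d := |y - 1| with hdd
    set s := min (ε / d) 1 with hss
    have hspos : 0 < s := lt_min (div_pos hε hd) one_pos
    have hsle : s ≤ 1 := min_le_right _ _
    -- two distinct points near 1 where φ vanishes
    have hval : ∀ t : ℝ, 0 ≤ t → t ≤ 1 → φ (t * y + (1 - t) * 1) = 0 := by
      intro t ht0 ht1
      have := hconv y 1 t ht0 ht1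
      simp [hy, hφ1] at this
      have h2 : t * y + (1 - t) * 1 = t * y + (1 - t) := by ring
      rw [h2]
      exact this
    have hnear : ∀ t : ℝ, 0 < t → t ≤ s / 2 → |(t * y + (1 - t) * 1) - 1| < ε := by
      intro t ht0 hts
      have : (t * y + (1 - t) * 1) - 1 = t * (y - 1) := by ring
      rw [this, abs_mul, abs_of_pos ht0]
      calc t * |y - 1| ≤ (s / 2) * d := by
            exact mul_le_mul hts le_rfl (abs_nonneg _) (by linarith [hspos])
        _ < (ε / d) * d := by
            apply mul_lt_mul_of_pos_right _ hd
            calc s / 2 < s := by linarith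
              _ ≤ ε / d := min_le_left _ _
        _ = ε := by field_simp
    set a := (s / 2) * y + (1 - s / 2) * 1 with ha
    set b := (s / 4) * y + (1 - s / 4) * 1 with hb
    have hane : a ≠ b := by
      intro h
      have : (s / 2 - s / 4) * (y - 1) = 0 := by
        have := h
        simp only [ha, hb] at this
        ring_nf
        ring_nf at this
        linarith
      rcases mul_eq_zero.mp this with h' | h'
      · linarith
      · exact hy1 (by linarith [sub_eq_zero.mp h'])
    have hφa : φ a = 0 := hval _ (by linarith) (by linarith)
    have hφb : φ b = 0 := hval _ (by linarith) (by linarith)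
    have hlt := hs a b (hnear _ (by linarith) le_rfl)
      (hnear _ (by linarith) (by linarith)) hane (1/2) (by norm_num) (by norm_num)
    rw [hφa, hφb] at hlt
    simp at hlt
  -- lower bound away from 1
  have hlb : ∀ δ : ℝ, 0 < δ → ∀ z : ℝ, δ ≤ |z - 1| →
      min (φ (1 + δ)) (φ (1 - δ)) ≤ φ z := by
    intro δ hδ z hz
    rcases le_abs.mp hz with h | h
    · -- z ≥ 1 + δ
      have hz1 : 1 + δ ≤ z := by linarith
      rcases eq_or_lt_of_le hz1 with h' | h'
      · rw [← h']; exact min_le_left _ _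
      · have hzgt : 1 < z := by linarith
        set t := δ / (z - 1) with ht
        have ht0 : 0 < t := div_pos hδ (by linarith)
        have ht1 : t < 1 := (div_lt_one (by linarith)).mpr (by linarith)
        have h3 : t * (z - 1) = δ := div_mul_cancel₀ δ (by intro h; nlinarith : z - 1 ≠ 0)
        have heq : t * z + (1 - t) * 1 = 1 + δ := by linear_combination h3
        have := hconv z 1 t ht0.le ht1.le
        rw [heq, hφ1, mul_zero, add_zero] at this
        calc min (φ (1 + δ)) (φ (1 - δ)) ≤ φ (1 + δ) := min_le_left _ _
          _ ≤ ENNReal.ofReal t * φ z := this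
          _ ≤ 1 * φ z := by
              gcongr
              exact ENNReal.ofReal_le_one.mpr ht1.le
          _ = φ z := one_mul _
    · -- z ≤ 1 - δ
      have hz1 : z ≤ 1 - δ := by linarith
      rcases eq_or_lt_of_le hz1 with h' | h'
      · rw [h']; exact min_le_right _ _
      · have hzlt : z < 1 := by linarith
        set t := δ / (1 - z) with ht
        have ht0 : 0 < t := div_pos hδ (by linarith)
        have ht1 : t < 1 := (div_lt_one (by linarith)).mpr (by linarith)
        have h3 : t * (1 - z) = δ := div_mul_cancel₀ δ (by intro h; nlinarith : 1 - z ≠ 0)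
        have heq : t * z + (1 - t) * 1 = 1 - δ := by linear_combination -h3
        have := hconv z 1 t ht0.le ht1.le
        rw [heq, hφ1, mul_zero, add_zero] at this
        calc min (φ (1 + δ)) (φ (1 - δ)) ≤ φ (1 - δ) := min_le_right _ _
          _ ≤ ENNReal.ofReal t * φ z := this
          _ ≤ 1 * φ z := by
              gcongr
              exact ENNReal.ofReal_le_one.mpr ht1.le
          _ = φ z := one_mul _
  -- withDensityᵥ of the constant 1 is the signed measure of P
  have key : P.withDensityᵥ (fun _ => (1 : ℝ)) = P.toSignedMeasure := by
    ext i hi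
    rw [withDensityᵥ_apply (integrable_const 1) hi,
      Measure.toSignedMeasure_apply_measurable hi]
    simp
  refine ⟨zero_le, ?_, ?_⟩
  · intro h0
    -- for each δ > 0, the set where |f - 1| ≥ δ is null
    have hnull : ∀ δ : ℝ, 0 < δ → P {x | δ ≤ |f x - 1|} = 0 := by
      intro δ hδ
      set c := min (φ (1 + δ)) (φ (1 - δ)) with hc
      have h1 : φ (1 + δ) ≠ 0 := fun h => by have := hzero _ h; linarith
      have h2 : φ (1 - δ) ≠ 0 := fun h => by have := hzero _ h; linarith
      have hcpos : 0 < c := by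
        rw [hc]
        exact lt_min (pos_iff_ne_zero.mpr h1) (pos_iff_ne_zero.mpr h2)
      have hcne : c ≠ 0 := hcpos.ne'
      set S := {x | δ ≤ |f x - 1|} with hS
      have hSm : MeasurableSet S :=
        measurableSet_le measurable_const ((hfm.sub measurable_const).abs)
      have hle : c * P S ≤ ∫⁻ x, φ (f x) ∂P := by
        have h1 : c * P S = ∫⁻ x, S.indicator (fun _ => c) x ∂P := by
          rw [lintegral_indicator hSm, setLIntegral_const]
        rw [h1]
        apply lintegral_mono
        intro x
        by_cases hx : x ∈ S
        · rw [Set.indicator_of_mem hx, hc]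
          exact hlb δ hδ (f x) hx
        · simp [hx]
      rw [h0] at hle
      have : c * P S = 0 := le_antisymm hle zero_le
      exact (mul_eq_zero.mp this).resolve_left hcne
    -- hence f = 1 a.e.
    have hae : f =ᵐ[P] fun _ => (1 : ℝ) := by
      rw [Filter.EventuallyEq, ae_iff]
      have hsub : {x | ¬ f x = (1 : ℝ)} ⊆ ⋃ n : ℕ, {x | 1 / (n + 1) ≤ |f x - 1|} := by
        intro x hx
        have : 0 < |f x - 1| := by
          simp only [Set.mem_setOf_eq] at hx
          simp [abs_pos, sub_eq_zero, hx]
        obtain ⟨n, hn⟩ := exists_nat_one_div_lt this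
        exact Set.mem_iUnion.mpr ⟨n, le_of_lt hn⟩
      refine measure_mono_null hsub (measure_iUnion_null fun n => ?_)
      exact hnull _ (by positivity)
    rw [← SignedMeasure.withDensityᵥ_rnDeriv_eq Q P hQP, ← key]
    exact WithDensityᵥEq.congr_ae hae
  · intro hQ
    have hae : f =ᵐ[P] fun _ => (1 : ℝ) := by
      apply Integrable.ae_eq_of_withDensityᵥ_eq (SignedMeasure.integrable_rnDeriv Q P)
        (integrable_const 1)
      rw [SignedMeasure.withDensityᵥ_rnDeriv_eq Q P hQP, hQ, key]
    calc ∫⁻ x, φ (f x) ∂P = ∫⁻ _, φ 1 ∂P :=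
          lintegral_congr_ae (hae.mono fun x hx => by simp [hx])
      _ = 0 := by simp [hφ1]
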